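/- Let f(x) = kx mod 1 on 𝕋 with integer k ≥ 2 and transfer operator Pφ(x) = (1/k)Σ_{i=0}^{k−1} φ((x+i)/k). For α ≥ 0, let 𝒞_α = {φ ∈ C²(𝕋, ℝ₊) : |φ''(x)/φ(x)| ≤ α for all x}. Then P(𝒞_α) ⊂ 𝒞_{α/k²}. -/

import Mathlib

lemma aux10 (c : ℝ) (k : ℕ) (ψ : ℝ → ℝ) (hψ : Differentiable ℝ ψ) :
    deriv (fun z : ℝ => c * ∑ i ∈ Finset.range k, ψ ((z + (i:ℝ)) / (k:ℝ))) =
    fun x : ℝ => (c * (k:ℝ)⁻¹) * ∑ i ∈ Finset.range k, deriv ψ ((x + (i:ℝ)) / (k:ℝ)) := by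
  funext x
  have h : HasDerivAt (fun z : ℝ => c * ∑ i ∈ Finset.range k, ψ ((z + (i:ℝ)) / (k:ℝ)))
      (c * ∑ i ∈ Finset.range k, (k:ℝ)⁻¹ * deriv ψ ((x + (i:ℝ)) / (k:ℝ))) x := by
    apply HasDerivAt.const_mul
    apply HasDerivAt.fun_sum
    intro i _
    have h1 : HasDerivAt (fun z : ℝ => (z + (i:ℝ)) / (k:ℝ)) ((k:ℝ)⁻¹) x := by
      simpa [one_div] using ((hasDerivAt_id x).add_const (i:ℝ)).div_const (k:ℝ)
    have := ((hψ ((x + (i:ℝ)) / (k:ℝ))).hasDerivAt).comp x h1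
    simpa [mul_comm, Function.comp_def] using this
  rw [h.deriv, Finset.mul_sum, Finset.mul_sum]
  refine Finset.sum_congr rfl fun i _ => by ring

/-- the transfer operator of `f(x) = kx mod 1` maps the cone
`𝒞_α = {φ ∈ C², φ > 0, |φ''/φ| ≤ α}` into `𝒞_{α/k²}`. -/
theorem stmt10 (k : ℕ) (hk : 2 ≤ k) (α : ℝ) (hα : 0 ≤ α) (φ : ℝ → ℝ)
    (hφpos : ∀ x, 0 < φ x) (hφper : Function.Periodic φ 1)
    (hφ : ContDiff ℝ 2 φ)
    (hcone : ∀ x, |deriv (deriv φ) x| ≤ α * φ x) :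
    ∀ x : ℝ,
      0 < (k:ℝ)⁻¹ * ∑ i ∈ Finset.range k, φ ((x + (i:ℝ)) / (k:ℝ)) ∧
      |deriv (deriv (fun z : ℝ =>
          (k:ℝ)⁻¹ * ∑ i ∈ Finset.range k, φ ((z + (i:ℝ)) / (k:ℝ)))) x| ≤
        (α / (k:ℝ)^2) * ((k:ℝ)⁻¹ * ∑ i ∈ Finset.range k, φ ((x + (i:ℝ)) / (k:ℝ))) := by
  intro x
  have hk0 : (0:ℝ) < (k:ℝ) := by exact_mod_cast (show 0 < k by omega)
  have hd1 : Differentiable ℝ φ := hφ.differentiable (by norm_num)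
  have hd2 : Differentiable ℝ (deriv φ) := by
    have h1 : ContDiff ℝ 1 (deriv^[1] φ) := ContDiff.iterate_deriv' 1 1 (by exact_mod_cast hφ)
    simpa using h1.differentiable one_ne_zero
  have hpos : 0 < (k:ℝ)⁻¹ * ∑ i ∈ Finset.range k, φ ((x + (i:ℝ)) / (k:ℝ)) := by
    apply mul_pos (inv_pos.mpr hk0)
    apply Finset.sum_pos (fun i _ => hφpos _)
    exact ⟨0, Finset.mem_range.mpr (by omega)⟩
  refine ⟨hpos, ?_⟩
  rw [aux10 ((k:ℝ)⁻¹) k φ hd1, aux10 ((k:ℝ)⁻¹ * (k:ℝ)⁻¹) k (deriv φ) hd2]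
  have hth : |((k:ℝ)⁻¹ * (k:ℝ)⁻¹ * (k:ℝ)⁻¹) * ∑ i ∈ Finset.range k,
      deriv (deriv φ) ((x + (i:ℝ)) / (k:ℝ))| ≤
      ((k:ℝ)⁻¹ * (k:ℝ)⁻¹ * (k:ℝ)⁻¹) * ∑ i ∈ Finset.range k,
      (α * φ ((x + (i:ℝ)) / (k:ℝ))) := by
    rw [abs_mul]
    rw [abs_of_pos (by positivity)]
    apply mul_le_mul_of_nonneg_left _ (by positivity)
    calc |∑ i ∈ Finset.range k, deriv (deriv φ) ((x + (i:ℝ)) / (k:ℝ))|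
        ≤ ∑ i ∈ Finset.range k, |deriv (deriv φ) ((x + (i:ℝ)) / (k:ℝ))| :=
          Finset.abs_sum_le_sum_abs _ _
      _ ≤ ∑ i ∈ Finset.range k, (α * φ ((x + (i:ℝ)) / (k:ℝ))) :=
          Finset.sum_le_sum (fun i _ => hcone _)
  refine hth.trans (le_of_eq ?_)
  rw [← Finset.mul_sum, div_eq_mul_inv, sq, mul_inv]
  ring
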